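/- Let C be a monoidal category that is abelian, such that the unit object 𝟙 is a projective object and, for every object W of C, the functor − ⊗ W preserves epimorphisms. Then every object R of C admitting a left dual — i.e., for which there exist an object R* and morphisms e_R : R* ⊗ R ⟶ 𝟙 and i_R : 𝟙 ⟶ R ⊗ R* satisfying the triangle identities ρ_R ∘ (id_R ⊗ e_R) ∘ α_{R,R*,R}⁻¹ ∘ (i_R ⊗ id_R) ∘ λ_R⁻¹ = id_R and λ_{R*} ∘ (e_R ⊗ id_{R*}) ∘ α_{R*,R,R*} ∘ (id_{R*} ⊗ i_R) ∘ ρ_{R*}⁻¹ = id_{R*} — is a projective object of C. -/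

import Mathlib

open CategoryTheory MonoidalCategory

/-- **Lemma 2.12.** In an abelian monoidal category whose unit object is projective and
whose tensoring functors `- ⊗ W` preserve epimorphisms, every object admitting a left dual
is projective. -/
theorem rigid_object_is_projective {C : Type*} [Category C] [MonoidalCategory C] [Abelian C]
    (hunit : Projective (𝟙_ C))
    (htens : ∀ (W : C) {A B : C} (p : A ⟶ B), Epi p → Epi (p ▷ W))
    (R R' : C) (e : R' ⊗ R ⟶ 𝟙_ C) (i : 𝟙_ C ⟶ R ⊗ R')
    (h1 : (λ_ R).inv ≫ (i ⊗ₘ 𝟙 R) ≫ (α_ R R' R).hom ≫ (𝟙 R ⊗ₘ e) ≫ (ρ_ R).hom = 𝟙 R)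
    (h2 : (ρ_ R').inv ≫ (𝟙 R' ⊗ₘ i) ≫ (α_ R' R R').inv ≫ (e ⊗ₘ 𝟙 R') ≫ (λ_ R').hom = 𝟙 R') :
    Projective R := by
  have h1' : (λ_ R).inv ≫ (i ▷ R) ≫ (α_ R R' R).hom ≫ (R ◁ e) ≫ (ρ_ R).hom = 𝟙 R := by
    simpa [tensorHom_id, id_tensorHom] using h1
  constructor
  intro W X f p hp
  have hEpi : Epi (p ▷ R') := htens R' p hp
  obtain ⟨g, hg⟩ := hunit.factors (i ≫ (f ▷ R')) (p ▷ R')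
  refine ⟨(λ_ R).inv ≫ (g ▷ R) ≫ (α_ W R' R).hom ≫ (W ◁ e) ≫ (ρ_ W).hom, ?_⟩
  rw [Category.assoc, Category.assoc, Category.assoc, Category.assoc]
  have := h1'
  calc (λ_ R).inv ≫ (g ▷ R) ≫ (α_ W R' R).hom ≫ (W ◁ e) ≫ (ρ_ W).hom ≫ p
      = (λ_ R).inv ≫ (g ▷ R) ≫ (α_ W R' R).hom ≫ (W ◁ e) ≫ (p ▷ 𝟙_ C) ≫ (ρ_ X).hom := by
        rw [MonoidalCategory.rightUnitor_naturality]
    _ = (λ_ R).inv ≫ (g ▷ R) ≫ (α_ W R' R).hom ≫ (p ▷ (R' ⊗ R)) ≫ (X ◁ e) ≫ (ρ_ X).hom := by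
        rw [MonoidalCategory.whisker_exchange_assoc]
    _ = (λ_ R).inv ≫ (g ▷ R) ≫ ((p ▷ R') ▷ R) ≫ (α_ X R' R).hom ≫ (X ◁ e) ≫ (ρ_ X).hom := by
        simp
    _ = (λ_ R).inv ≫ ((i ≫ (f ▷ R')) ▷ R) ≫ (α_ X R' R).hom ≫ (X ◁ e) ≫ (ρ_ X).hom := by
        rw [← MonoidalCategory.comp_whiskerRight_assoc, hg]
    _ = (λ_ R).inv ≫ (i ▷ R) ≫ ((f ▷ R') ▷ R) ≫ (α_ X R' R).hom ≫ (X ◁ e) ≫ (ρ_ X).hom := by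
        rw [MonoidalCategory.comp_whiskerRight_assoc]
    _ = (λ_ R).inv ≫ (i ▷ R) ≫ (α_ R R' R).hom ≫ (f ▷ (R' ⊗ R)) ≫ (X ◁ e) ≫ (ρ_ X).hom := by
        simp
    _ = (λ_ R).inv ≫ (i ▷ R) ≫ (α_ R R' R).hom ≫ (R ◁ e) ≫ (f ▷ 𝟙_ C) ≫ (ρ_ X).hom := by
        rw [← MonoidalCategory.whisker_exchange_assoc]
    _ = ((λ_ R).inv ≫ (i ▷ R) ≫ (α_ R R' R).hom ≫ (R ◁ e) ≫ (ρ_ R).hom) ≫ f := by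
        simp
    _ = f := by rw [h1']; simp
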